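/- Suppose for each level ℓ = 0,…,L the variance of the correction term satisfies V_ℓ ≤ C·2^{-βℓ} and the per-sample cost satisfies C_ℓ ≤ C'·2^{γℓ}, with β > γ > 0. Then, choosing N_ℓ proportional to √(V_ℓ/C_ℓ), the total cost Σ_ℓ N_ℓ C_ℓ needed to achieve Σ_ℓ V_ℓ/N_ℓ ≤ ε² is bounded by a constant times ε^{-2} (up to the rounding of N_ℓ to integers, i.e., with N_ℓ = ⌈ε^{-2}√(V_ℓ/C_ℓ)·Σ_k √(V_k C_k)⌉, total cost ≤ ε^{-2}(Σ_ℓ √(V_ℓ C_ℓ))² + Σ_ℓ C_ℓ). -/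

import Mathlib

open Finset

theorem stmt_16 (L : ℕ) (V C : ℕ → ℝ)
    (hV : ∀ ℓ ≤ L, 0 < V ℓ) (hC : ∀ ℓ ≤ L, 0 < C ℓ)
    (Cb Cb' β γ : ℝ) (hCb : 0 < Cb) (hCb' : 0 < Cb') (hγ : 0 < γ) (hβγ : γ < β)
    (hVbound : ∀ ℓ ≤ L, V ℓ ≤ Cb * 2 ^ (-β * ℓ))
    (hCbound : ∀ ℓ ≤ L, C ℓ ≤ Cb' * 2 ^ (γ * ℓ))
    (ε : ℝ) (hε : 0 < ε)
    (N : ℕ → ℕ)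
    (hN : ∀ ℓ ≤ L, N ℓ =
      ⌈ε ^ (-2 : ℤ) * Real.sqrt (V ℓ / C ℓ) *
        ∑ k ∈ range (L + 1), Real.sqrt (V k * C k)⌉₊) :
    (∑ ℓ ∈ range (L + 1), V ℓ / (N ℓ : ℝ)) ≤ ε ^ 2 ∧
      (∑ ℓ ∈ range (L + 1), (N ℓ : ℝ) * C ℓ) ≤
        ε ^ (-2 : ℤ) * (∑ ℓ ∈ range (L + 1), Real.sqrt (V ℓ * C ℓ)) ^ 2 +
          ∑ ℓ ∈ range (L + 1), C ℓ := by
  set S : ℝ := ∑ k ∈ range (L + 1), Real.sqrt (V k * C k) with hS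
  have hE : (0:ℝ) < ε ^ (-2 : ℤ) := by positivity
  have hSpos : 0 < S := by
    apply Finset.sum_pos
    · intro k hk
      have hk' : k ≤ L := Nat.lt_succ_iff.mp (Finset.mem_range.mp hk)
      exact Real.sqrt_pos.mpr (mul_pos (hV k hk') (hC k hk'))
    · exact ⟨0, Finset.mem_range.mpr (Nat.succ_pos L)⟩
  constructor
  · have hterm : ∀ ℓ ∈ range (L + 1),
        V ℓ / (N ℓ : ℝ) ≤ ε ^ 2 * (Real.sqrt (V ℓ * C ℓ) / S) := by
      intro ℓ hℓmem
      have hℓ : ℓ ≤ L := Nat.lt_succ_iff.mp (Finset.mem_range.mp hℓmem)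
      have hVℓ := hV ℓ hℓ
      have hCℓ := hC ℓ hℓ
      have hq : 0 < Real.sqrt (V ℓ / C ℓ) := Real.sqrt_pos.mpr (div_pos hVℓ hCℓ)
      have hxpos : 0 < ε ^ (-2 : ℤ) * Real.sqrt (V ℓ / C ℓ) * S := by positivity
      have hle : ε ^ (-2 : ℤ) * Real.sqrt (V ℓ / C ℓ) * S ≤ (N ℓ : ℝ) := by
        rw [hN ℓ hℓ]; exact Nat.le_ceil _
      have h1 : V ℓ / (N ℓ : ℝ) ≤ V ℓ / (ε ^ (-2 : ℤ) * Real.sqrt (V ℓ / C ℓ) * S) := by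
        gcongr
      refine h1.trans_eq ?_
      have e1 : Real.sqrt (V ℓ / C ℓ) = Real.sqrt (V ℓ) / Real.sqrt (C ℓ) :=
        Real.sqrt_div hVℓ.le _
      have e2 : Real.sqrt (V ℓ * C ℓ) = Real.sqrt (V ℓ) * Real.sqrt (C ℓ) :=
        Real.sqrt_mul hVℓ.le _
      have sV : 0 < Real.sqrt (V ℓ) := Real.sqrt_pos.mpr hVℓ
      have sC : 0 < Real.sqrt (C ℓ) := Real.sqrt_pos.mpr hCℓ
      have vV : Real.sqrt (V ℓ) * Real.sqrt (V ℓ) = V ℓ := Real.mul_self_sqrt hVℓ.le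
      rw [e1, e2, zpow_neg, zpow_two]
      field_simp
      rw [← vV]; ring_nf; rw [Real.sqrt_sq sV.le]
    calc ∑ ℓ ∈ range (L + 1), V ℓ / (N ℓ : ℝ)
        ≤ ∑ ℓ ∈ range (L + 1), ε ^ 2 * (Real.sqrt (V ℓ * C ℓ) / S) :=
          Finset.sum_le_sum hterm
      _ = ε ^ 2 := by
          rw [← Finset.mul_sum, ← Finset.sum_div, ← hS, div_self hSpos.ne', mul_one]
  · have hterm : ∀ ℓ ∈ range (L + 1),
        (N ℓ : ℝ) * C ℓ ≤ ε ^ (-2 : ℤ) * Real.sqrt (V ℓ * C ℓ) * S + C ℓ := by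
      intro ℓ hℓmem
      have hℓ : ℓ ≤ L := Nat.lt_succ_iff.mp (Finset.mem_range.mp hℓmem)
      have hVℓ := hV ℓ hℓ
      have hCℓ := hC ℓ hℓ
      have hq : 0 ≤ ε ^ (-2 : ℤ) * Real.sqrt (V ℓ / C ℓ) * S := by positivity
      have hle : (N ℓ : ℝ) ≤ ε ^ (-2 : ℤ) * Real.sqrt (V ℓ / C ℓ) * S + 1 := by
        rw [hN ℓ hℓ]
        exact (Nat.ceil_lt_add_one hq).le
      have key : Real.sqrt (V ℓ / C ℓ) * C ℓ = Real.sqrt (V ℓ * C ℓ) := by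
        rw [Real.sqrt_div hVℓ.le, Real.sqrt_mul hVℓ.le, div_mul_eq_mul_div,
          mul_div_assoc, Real.div_sqrt]
      calc (N ℓ : ℝ) * C ℓ ≤ (ε ^ (-2 : ℤ) * Real.sqrt (V ℓ / C ℓ) * S + 1) * C ℓ := by
            apply mul_le_mul_of_nonneg_right hle hCℓ.le
        _ = ε ^ (-2 : ℤ) * Real.sqrt (V ℓ * C ℓ) * S + C ℓ := by
            rw [add_mul, one_mul]
            congr 1
            rw [← key]; ring
    calc ∑ ℓ ∈ range (L + 1), (N ℓ : ℝ) * C ℓ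
        ≤ ∑ ℓ ∈ range (L + 1), (ε ^ (-2 : ℤ) * Real.sqrt (V ℓ * C ℓ) * S + C ℓ) :=
          Finset.sum_le_sum hterm
      _ = ε ^ (-2 : ℤ) * S ^ 2 + ∑ ℓ ∈ range (L + 1), C ℓ := by
          rw [Finset.sum_add_distrib]
          congr 1
          rw [show ∀ f : ℕ → ℝ, ∑ ℓ ∈ range (L+1), ε ^ (-2 : ℤ) * f ℓ * S
              = (∑ ℓ ∈ range (L+1), f ℓ) * (ε ^ (-2 : ℤ) * S) from fun f => by
                rw [Finset.sum_mul]; exact Finset.sum_congr rfl fun _ _ => by ring]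
          rw [← hS, sq]; ring
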